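/- (Rank characterization of Kronecker sum decompositions.) Let m₁, m₂, n₁, n₂, R : ℕ and let G be a real matrix indexed by (Fin m₁ × Fin m₂) × (Fin n₁ × Fin n₂). Then G can be written as G = Σ_{r=1}^{R} B_r ⊗ C_r for some B_r : Matrix (Fin m₁) (Fin n₁) ℝ and C_r : Matrix (Fin m₂) (Fin n₂) ℝ if and only if the rank of the rearranged matrix R(G) is at most R. -/

import Mathlib

open Matrix

lemma sum_dite_lt {k R : ℕ} {M : Type*} [AddCommMonoid M] (h : k ≤ R) (G : Fin k → M) :
    (∑ r : Fin R, if h' : (r : ℕ) < k then G ⟨r, h'⟩ else 0) = ∑ s : Fin k, G s := by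
  have h1 : (∑ r ∈ Finset.univ.map (Fin.castLEEmb h),
      if h' : (r : ℕ) < k then G ⟨r, h'⟩ else 0)
      = ∑ r : Fin R, if h' : (r : ℕ) < k then G ⟨r, h'⟩ else 0 :=
    Finset.sum_subset (Finset.subset_univ _) (fun x _ hx => dif_neg fun hlt =>
      hx (Finset.mem_map.2 ⟨⟨x, hlt⟩, Finset.mem_univ _, by simp [Fin.castLEEmb, Fin.castLE]⟩))
  rw [← h1, Finset.sum_map]
  refine Finset.sum_congr rfl fun s _ => ?_
  have hs : ((Fin.castLEEmb h) s : ℕ) < k := s.isLt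
  rw [dif_pos hs]
  congr 1

lemma rank_le_iff_exists_mul {α β : Type*} [Fintype α] [Fintype β] [DecidableEq α]
    [DecidableEq β] (M : Matrix α β ℝ) (R : ℕ) :
    M.rank ≤ R ↔ ∃ (A : Matrix α (Fin R) ℝ) (B : Matrix (Fin R) β ℝ), M = A * B := by
  constructor
  · intro hrank
    set W := LinearMap.range M.mulVecLin with hW
    have hk : Module.finrank ℝ W = M.rank := rfl
    set k := Module.finrank ℝ W with hkdef
    have hkR : k ≤ R := hk ▸ hrank
    let b : Module.Basis (Fin k) ℝ W := Module.finBasis ℝ W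
    have hcol : ∀ j : β, (fun i => M i j) ∈ W := by
      intro j
      refine ⟨Pi.single j 1, ?_⟩
      ext i
      simp [Matrix.mulVecLin, Matrix.mulVec, dotProduct, Pi.single_apply]
    let col : β → W := fun j => ⟨fun i => M i j, hcol j⟩
    refine ⟨Matrix.of fun i r => if h' : (r : ℕ) < k then (b ⟨r, h'⟩ : α → ℝ) i else 0,
      Matrix.of fun r j => if h' : (r : ℕ) < k then b.repr (col j) ⟨r, h'⟩ else 0, ?_⟩
    ext i j
    have hsum : (∑ s : Fin k, b.repr (col j) s • b s) = col j := b.sum_repr (col j)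
    have := congrArg (fun w : W => (w : α → ℝ) i) hsum
    simp only [Submodule.coe_sum, Submodule.coe_smul, Finset.sum_apply, Pi.smul_apply,
      smul_eq_mul] at this
    rw [Matrix.mul_apply]
    simp only [Matrix.of_apply]
    have : M i j = ∑ s : Fin k, (b s : α → ℝ) i * b.repr (col j) s := by
      refine this.symm.trans ?_; exact Finset.sum_congr rfl fun s _ => mul_comm _ _
    rw [this, ← sum_dite_lt hkR (fun s => (b s : α → ℝ) i * b.repr (col j) s)]
    refine Finset.sum_congr rfl fun r _ => ?_
    by_cases h' : (r : ℕ) < k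
    · simp [h']
    · simp [h']
  · rintro ⟨A, B, rfl⟩
    exact le_trans (Matrix.rank_mul_le_right A B) (le_trans (Matrix.rank_le_card_height B)
      (by simp))

/-- The Van Loan rearrangement operator. -/
def rearrange {m₁ m₂ n₁ n₂ : ℕ}
    (G : Matrix (Fin m₁ × Fin m₂) (Fin n₁ × Fin n₂) ℝ) :
    Matrix (Fin m₁ × Fin n₁) (Fin m₂ × Fin n₂) ℝ :=
  Matrix.of fun p q => G (p.1, q.1) (p.2, q.2)

/-- Rank characterization of Kronecker sum decompositions: `G` is a sum of `R`
Kronecker products iff the rank of the rearranged matrix is at most `R`. -/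
theorem kronecker_sum_iff_rank_le (m₁ m₂ n₁ n₂ R : ℕ)
    (G : Matrix (Fin m₁ × Fin m₂) (Fin n₁ × Fin n₂) ℝ) :
    (∃ (B : Fin R → Matrix (Fin m₁) (Fin n₁) ℝ)
       (C : Fin R → Matrix (Fin m₂) (Fin n₂) ℝ),
       G = ∑ r, Matrix.kroneckerMap (· * ·) (B r) (C r)) ↔
    (rearrange G).rank ≤ R := by
  rw [rank_le_iff_exists_mul]
  constructor
  · rintro ⟨B, C, rfl⟩
    refine ⟨Matrix.of fun p r => B r p.1 p.2, Matrix.of fun r q => C r q.1 q.2, ?_⟩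
    ext p q
    simp [rearrange, Matrix.mul_apply, Matrix.kroneckerMap, Matrix.sum_apply]
  · rintro ⟨A, Bm, hAB⟩
    refine ⟨fun r => Matrix.of fun i j => A (i, j) r,
      fun r => Matrix.of fun i j => Bm r (i, j), ?_⟩
    ext ⟨i₁, i₂⟩ ⟨j₁, j₂⟩
    have := congrFun (congrFun hAB (i₁, j₁)) (i₂, j₂)
    simp only [rearrange, Matrix.of_apply, Matrix.mul_apply] at this
    simpa [Matrix.kroneckerMap, Matrix.sum_apply] using this
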